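/- Let X be a real Banach space such that X* has the Krein–Milman property (equivalently, X is an Asplund space), and let ‖·‖₁ and ‖·‖₂ be two equivalent dual norms on X*. If the unit sphere of (X*, ‖·‖₁), equipped with the relative w*-topology, has property (*), then the unit sphere of (X*, ‖·‖₂), equipped with the relative w*-topology, also has property (*). -/

import Mathlib

set_option maxHeartbeats 1000000


/-- A topological space `T` has property (*). -/
def HasStarProperty (T : Type*) [TopologicalSpace T] : Prop :=
  ∃ 𝒰 : ℕ → Set (Set T),
    (∀ j, ∀ U ∈ 𝒰 j, IsOpen U) ∧
    ∀ x y : T, ∃ j, ({x, y} ∩ ⋃₀ 𝒰 j).Nonempty ∧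
      ∀ U ∈ 𝒰 j, ({x, y} ∩ U).Subsingleton

/-- `N` is an equivalent dual norm on `X*`: a norm equivalent to the operator norm that is
lower semicontinuous with respect to the weak-star topology. -/
def IsEquivDualNorm (X : Type*) [NormedAddCommGroup X] [NormedSpace ℝ X]
    (N : (X →L[ℝ] ℝ) → ℝ) : Prop :=
  (∀ f g : X →L[ℝ] ℝ, N (f + g) ≤ N f + N g) ∧
  (∀ (c : ℝ) (f : X →L[ℝ] ℝ), N (c • f) = |c| * N f) ∧
  (∃ c d : ℝ, 0 < c ∧ 0 < d ∧ ∀ f : X →L[ℝ] ℝ, c * ‖f‖ ≤ N f ∧ N f ≤ d * ‖f‖) ∧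
  LowerSemicontinuous fun f : WeakDual ℝ X => N (WeakDual.toStrongDual f)

open Topology
namespace StarAux

/-- The family of all open sets that are "separated" for the predicate `P`:
no two distinct `P`-related points belong to such a set simultaneously. -/
def Sep {T : Type*} [TopologicalSpace T] (P : T → T → Prop) : Set (Set T) :=
  {V | IsOpen V ∧ ∀ a ∈ V, ∀ b ∈ V, P a b → a = b}

lemma pair_subsingleton {T : Type*} {x y : T} {U : Set T} (h : ¬(x ∈ U ∧ y ∈ U)) :
    ({x, y} ∩ U).Subsingleton := by
  intro a ⟨ha, haU⟩ b ⟨hb, hbU⟩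
  rcases ha with rfl | ha
  · rcases hb with rfl | hb
    · rfl
    · rw [Set.mem_singleton_iff] at hb
      subst hb
      exact absurd ⟨haU, hbU⟩ h
  · rw [Set.mem_singleton_iff] at ha
    subst ha
    rcases hb with rfl | hb
    · exact absurd ⟨hbU, haU⟩ h
    · rw [Set.mem_singleton_iff] at hb
      subst hb
      rfl

/-- Sufficient criterion for property (*): countably many predicates such that every pair
is "caught" by one of them together with a separated open set around one of the points. -/
lemma hasStar_of_preds {T : Type*} [TopologicalSpace T] {ι : Type*} [Encodable ι]
    (P : ι → T → T → Prop)
    (h : ∀ x y : T, ∃ i, (x = y ∨ P i x y ∨ P i y x) ∧ ∃ V ∈ Sep (P i), x ∈ V ∨ y ∈ V) :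
    HasStarProperty T := by
  classical
  refine ⟨fun n => (Encodable.decode (α := ι) n).elim ∅ (fun i => Sep (P i)), ?_, ?_⟩
  · intro j U hU
    cases hdec : (Encodable.decode (α := ι) j) with
    | none => simp only [hdec, Option.elim] at hU; exact absurd hU (Set.notMem_empty U)
    | some i => simp only [hdec, Option.elim] at hU; exact hU.1
  · intro x y
    obtain ⟨i, hP, V, hV, hxy⟩ := h x y
    refine ⟨Encodable.encode i, ?_, ?_⟩
    · simp only [Encodable.encodek, Option.elim]
      rcases hxy with hx | hy
      · exact ⟨x, Set.mem_insert _ _, V, hV, hx⟩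
      · exact ⟨y, Set.mem_insert_of_mem _ rfl, V, hV, hy⟩
    · simp only [Encodable.encodek, Option.elim]
      intro U hU
      by_cases hxy' : x = y
      · subst hxy'
        intro a ⟨ha, _⟩ b ⟨hb, _⟩
        simp only [Set.mem_insert_iff, Set.mem_singleton_iff, or_self] at ha hb
        rw [ha, hb]
      · apply pair_subsingleton
        rintro ⟨hx, hy⟩
        rcases hP with rfl | hPxy | hPyx
        · exact hxy' rfl
        · exact hxy' (hU.2 x hx y hy hPxy)
        · exact hxy' ((hU.2 y hy x hx hPyx).symm)

variable {X : Type*} [NormedAddCommGroup X] [NormedSpace ℝ X]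

/-- From a weak-star open set around a point, extract a finite "box" neighborhood. -/
lemma weakdual_box {Ω : Set (WeakDual ℝ X)} (hΩ : IsOpen Ω) {g : WeakDual ℝ X} (hg : g ∈ Ω) :
    ∃ (s : Finset X) (δ : ℝ), 0 < δ ∧
      {h : WeakDual ℝ X | ∀ w ∈ s, |h w - g w| < δ} ⊆ Ω := by
  classical
  have hΩ' : IsOpen[TopologicalSpace.induced
      (fun (x : WeakDual ℝ X) (y : X) => topDualPairing ℝ X x y) Pi.topologicalSpace] Ω := hΩ
  obtain ⟨O, hO, hpre⟩ := isOpen_induced_iff.1 hΩ'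
  have hgO : (fun y => topDualPairing ℝ X g y) ∈ O := by
    show g ∈ (fun (x : WeakDual ℝ X) (y : X) => topDualPairing ℝ X x y) ⁻¹' O
    rw [hpre]; exact hg
  obtain ⟨I, V, hIV, hsub⟩ := isOpen_pi_iff.1 hO _ hgO
  have hball : ∀ w ∈ I, ∃ ε : ℝ, 0 < ε ∧ Metric.ball (g w) ε ⊆ V w := by
    intro w hw
    obtain ⟨hVo, hgV⟩ := hIV w hw
    obtain ⟨ε, hε, hb⟩ := Metric.isOpen_iff.1 hVo _ hgV
    exact ⟨ε, hε, hb⟩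
  choose! ε hε0 hεsub using hball
  rcases I.eq_empty_or_nonempty with hI | hI
  · refine ⟨∅, 1, one_pos, fun h _ => ?_⟩
    rw [← hpre]
    apply hsub
    intro w hw
    rw [hI] at hw
    exact absurd hw (by simp)
  · obtain ⟨w₀, hw₀, hmin⟩ := I.exists_min_image ε hI
    refine ⟨I, ε w₀, hε0 _ hw₀, fun h hh => ?_⟩
    rw [← hpre]
    apply hsub
    intro w hw
    apply hεsub w hw
    rw [Metric.mem_ball, Real.dist_eq]
    calc |topDualPairing ℝ X h w - g w| = |h w - g w| := rfl
      _ < ε w₀ := hh w hw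
      _ ≤ ε w := hmin w hw

/-- The predicate family used to verify property (*) for the sphere of `N₂`. -/
def PB (N₁ N₂ : (X →L[ℝ] ℝ) → ℝ)
    (𝒰 : ℕ → Set (Set {f : WeakDual ℝ X // N₁ (WeakDual.toStrongDual f) = 1}))
    (i : Option (ℚ ⊕ ℕ × ℚ × ℚ))
    (a b : {f : WeakDual ℝ X // N₂ (WeakDual.toStrongDual f) = 1}) : Prop :=
  match i with
  | none => False
  | some (Sum.inl q) =>
      (N₁ (WeakDual.toStrongDual b.1) ≤ (q : ℝ) ∧ (q : ℝ) < N₁ (WeakDual.toStrongDual a.1)) ∨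
      (N₁ (WeakDual.toStrongDual a.1) ≤ (q : ℝ) ∧ (q : ℝ) < N₁ (WeakDual.toStrongDual b.1))
  | some (Sum.inr (j, q₁, q₂)) =>
      N₁ (WeakDual.toStrongDual a.1) = N₁ (WeakDual.toStrongDual b.1) ∧
      (q₁ : ℝ) < N₁ (WeakDual.toStrongDual a.1) ∧ N₁ (WeakDual.toStrongDual a.1) < (q₂ : ℝ) ∧
      ∃ α β : {f : WeakDual ℝ X // N₁ (WeakDual.toStrongDual f) = 1},
        a.1 = N₁ (WeakDual.toStrongDual a.1) • α.1 ∧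
        b.1 = N₁ (WeakDual.toStrongDual b.1) • β.1 ∧
        (∃ U ∈ 𝒰 j, α ∈ U ∨ β ∈ U) ∧ (∀ U ∈ 𝒰 j, ¬(α ∈ U ∧ β ∈ U))

/-- The key construction: if the two points of the pair have the same positive `N₁`-value `r`
and the normalized point `u` of `x` is covered by a member `U₀` of the `j`-th family on the
`N₁`-sphere, then a suitable predicate index and a separated open set around `x` exist. -/
lemma key (N₁ N₂ : (X →L[ℝ] ℝ) → ℝ)
    (𝒰 : ℕ → Set (Set {f : WeakDual ℝ X // N₁ (WeakDual.toStrongDual f) = 1}))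
    (x y : {f : WeakDual ℝ X // N₂ (WeakDual.toStrongDual f) = 1})
    (u v : {f : WeakDual ℝ X // N₁ (WeakDual.toStrongDual f) = 1})
    (r : ℝ) (hr : 0 < r)
    (hrx : N₁ (WeakDual.toStrongDual x.1) = r) (hry : N₁ (WeakDual.toStrongDual y.1) = r)
    (hxy : x ≠ y) (hu : u.1 = r⁻¹ • x.1) (hv : v.1 = r⁻¹ • y.1)
    (j : ℕ) (U₀ : Set {f : WeakDual ℝ X // N₁ (WeakDual.toStrongDual f) = 1})
    (hU₀ : U₀ ∈ 𝒰 j) (hU₀open : IsOpen U₀) (huU₀ : u ∈ U₀)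
    (hsub : ∀ U ∈ 𝒰 j, ({u, v} ∩ U).Subsingleton) :
    ∃ i, PB N₁ N₂ 𝒰 i x y ∧ ∃ V ∈ Sep (PB N₁ N₂ 𝒰 i), x ∈ V := by
  classical
  have huv : u ≠ v := by
    intro h
    apply hxy
    apply Subtype.ext
    have h1 : r⁻¹ • x.1 = r⁻¹ • y.1 := by rw [← hu, ← hv, h]
    have h2 := congrArg (fun z => r • z) h1
    simpa [smul_smul, mul_inv_cancel₀ hr.ne'] using h2
  -- extract an ambient open set for U₀
  have hU₀' : IsOpen[TopologicalSpace.induced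
      (Subtype.val : {f : WeakDual ℝ X // N₁ (WeakDual.toStrongDual f) = 1} → WeakDual ℝ X)
      inferInstance] U₀ := hU₀open
  obtain ⟨Ω, hΩopen, hΩpre⟩ := isOpen_induced_iff.1 hU₀'
  have huΩ : u.1 ∈ Ω := by
    rw [← hΩpre] at huU₀
    exact huU₀
  obtain ⟨s, δ, hδ, hbox⟩ := weakdual_box hΩopen huΩ
  set B : ℝ := 1 + ∑ w ∈ s, |x.1 w| with hBdef
  have hsum : (0:ℝ) ≤ ∑ w ∈ s, |x.1 w| := Finset.sum_nonneg fun w _ => abs_nonneg _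
  have hB1 : 1 ≤ B := by rw [hBdef]; linarith
  have hB0 : 0 < B := by linarith
  have hBw : ∀ w ∈ s, |x.1 w| ≤ B := by
    intro w hw
    have := Finset.single_le_sum (f := fun w => |x.1 w|) (fun i _ => abs_nonneg _) hw
    rw [hBdef]; linarith
  set θ : ℝ := min (r / 2) (δ * r * r / (16 * B)) with hθdef
  have hθ0 : 0 < θ := by
    rw [hθdef]
    apply lt_min (by linarith)
    positivity
  have hθr : θ ≤ r / 2 := min_le_left _ _
  have hθB : θ ≤ δ * r * r / (16 * B) := min_le_right _ _
  obtain ⟨q₁, hq₁l, hq₁r⟩ := exists_rat_btwn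
    (show max (r / 2) (r - θ) < r from max_lt (by linarith) (by linarith))
  obtain ⟨q₂, hq₂l, hq₂r⟩ := exists_rat_btwn (show r < r + θ by linarith)
  have hq₁half : r / 2 < (q₁ : ℝ) := lt_of_le_of_lt (le_max_left _ _) hq₁l
  have hq₁theta : r - θ < (q₁ : ℝ) := lt_of_le_of_lt (le_max_right _ _) hq₁l
  set δ'' : ℝ := δ * r / 8 with hδ''def
  have hδ'' : 0 < δ'' := by rw [hδ''def]; positivity
  refine ⟨some (Sum.inr (j, q₁, q₂)), ?_, ?_⟩
  · -- the predicate holds for the pair (x, y)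
    refine ⟨by rw [hrx, hry], by rw [hrx]; exact hq₁r, by rw [hrx]; exact hq₂l,
      u, v, ?_, ?_, ⟨U₀, hU₀, Or.inl huU₀⟩, ?_⟩
    · rw [hrx, hu, smul_smul, mul_inv_cancel₀ hr.ne', one_smul]
    · rw [hry, hv, smul_smul, mul_inv_cancel₀ hr.ne', one_smul]
    · intro U hU hb
      exact huv (hsub U hU ⟨Or.inl rfl, hb.1⟩ ⟨Or.inr rfl, hb.2⟩)
  · -- the separated open set around x
    refine ⟨{f | ∀ w ∈ s, |f.1 w - x.1 w| < δ''}, ⟨?_, ?_⟩, ?_⟩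
    · -- openness
      have hEq : {f : {f : WeakDual ℝ X // N₂ (WeakDual.toStrongDual f) = 1} |
          ∀ w ∈ s, |f.1 w - x.1 w| < δ''} =
          ⋂ w ∈ s, {f : {f : WeakDual ℝ X // N₂ (WeakDual.toStrongDual f) = 1} |
            |f.1 w - x.1 w| < δ''} := by
        ext f; simp
      rw [hEq]
      apply isOpen_biInter_finset
      intro w _
      have hcont : Continuous fun f : {f : WeakDual ℝ X // N₂ (WeakDual.toStrongDual f) = 1} =>
          f.1 w := (WeakDual.eval_continuous w).comp continuous_subtype_val
      have hEq2 : {f : {f : WeakDual ℝ X // N₂ (WeakDual.toStrongDual f) = 1} |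
          |f.1 w - x.1 w| < δ''} =
          (fun f : {f : WeakDual ℝ X // N₂ (WeakDual.toStrongDual f) = 1} => f.1 w) ⁻¹'
            (Metric.ball (x.1 w) δ'') := by
        ext f
        simp [Metric.mem_ball, Real.dist_eq]
      rw [hEq2]
      exact Metric.isOpen_ball.preimage hcont
    · -- separation
      intro a ha b hb hP
      obtain ⟨hab, haq₁, haq₂, α, β, hαa, hβb, _, hall⟩ := hP
      exfalso
      set ρ := N₁ (WeakDual.toStrongDual a.1) with hρdef
      have hρhalf : r / 2 < ρ := lt_trans hq₁half haq₁
      have hρ0 : 0 < ρ := by linarith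
      have hρq₂ : ρ < (q₂ : ℝ) := haq₂
      -- a generic membership fact
      have hmem : ∀ (p : {f : WeakDual ℝ X // N₂ (WeakDual.toStrongDual f) = 1})
          (γ : {f : WeakDual ℝ X // N₁ (WeakDual.toStrongDual f) = 1}),
          (∀ w ∈ s, |p.1 w - x.1 w| < δ'') → p.1 = ρ • γ.1 → γ ∈ U₀ := by
        intro p γ hpV hγ
        have hγΩ : γ.1 ∈ Ω := by
          apply hbox
          intro w hw
          have h1 : p.1 w = ρ * γ.1 w := by
            have := congrArg (fun (f : WeakDual ℝ X) => f w) hγ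
            exact this
          have h2 : γ.1 w = ρ⁻¹ * p.1 w := by
            rw [h1, inv_mul_cancel_left₀ hρ0.ne']
          have h3 : u.1 w = r⁻¹ * x.1 w := by rw [hu]; rfl
          rw [h2, h3]
          have hdecomp : ρ⁻¹ * p.1 w - r⁻¹ * x.1 w
              = ρ⁻¹ * (p.1 w - x.1 w) + (ρ⁻¹ - r⁻¹) * x.1 w := by ring
          rw [hdecomp]
          have e0 : |p.1 w - x.1 w| < δ'' := hpV w hw
          have hρinv : ρ⁻¹ < 2 / r := by
            have h2r : (r / 2)⁻¹ = 2 / r := by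
              rw [inv_div]
            rw [← h2r]
            exact inv_strictAnti₀ (by linarith) hρhalf
          have e1 : |ρ⁻¹ * (p.1 w - x.1 w)| < δ / 4 := by
            rw [abs_mul, abs_of_pos (inv_pos.2 hρ0)]
            have t1 : ρ⁻¹ * |p.1 w - x.1 w| < ρ⁻¹ * δ'' :=
              mul_lt_mul_of_pos_left e0 (inv_pos.2 hρ0)
            have t2 : ρ⁻¹ * δ'' < (2 / r) * δ'' := mul_lt_mul_of_pos_right hρinv hδ''
            have t3 : (2 / r) * δ'' = δ / 4 := by
              rw [hδ''def]
              field_simp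
              ring
            linarith
          have e2 : |(ρ⁻¹ - r⁻¹) * x.1 w| ≤ δ / 8 := by
            rw [abs_mul]
            have h6 : |ρ⁻¹ - r⁻¹| = |r - ρ| / (ρ * r) := by
              rw [inv_sub_inv hρ0.ne' hr.ne', abs_div,
                abs_of_pos (mul_pos hρ0 hr)]
            have h7 : |r - ρ| ≤ θ := by
              rw [abs_le]
              constructor
              · linarith
              · linarith
            have hxwB : |x.1 w| ≤ B := hBw w hw
            have hA : |ρ⁻¹ - r⁻¹| ≤ 2 * θ / (r * r) := by
              rw [h6, div_le_div_iff₀ (mul_pos hρ0 hr) (mul_pos hr hr)]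
              nlinarith [mul_le_mul_of_nonneg_right h7 (mul_pos hr hr).le,
                mul_pos (mul_pos hθ0 hr) (show (0:ℝ) < 2 * ρ - r by linarith)]
            have hfin : 2 * θ / (r * r) * B ≤ δ / 8 := by
              have h1 : 2 * θ / (r * r) * B = θ * (2 * B / (r * r)) := by ring
              have h2 : (δ * r * r / (16 * B)) * (2 * B / (r * r)) = δ / 8 := by
                field_simp
                ring
              rw [h1, ← h2]
              exact mul_le_mul_of_nonneg_right hθB
                (div_nonneg (by linarith) (mul_pos hr hr).le)
            calc |ρ⁻¹ - r⁻¹| * |x.1 w| ≤ (2 * θ / (r * r)) * B :=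
                  mul_le_mul hA hxwB (abs_nonneg _) (div_nonneg (by linarith) (mul_pos hr hr).le)
              _ ≤ δ / 8 := hfin
          calc |ρ⁻¹ * (p.1 w - x.1 w) + (ρ⁻¹ - r⁻¹) * x.1 w|
              ≤ |ρ⁻¹ * (p.1 w - x.1 w)| + |(ρ⁻¹ - r⁻¹) * x.1 w| := abs_add_le _ _
            _ < δ := by linarith
        rw [← hΩpre]
        exact hγΩ
      exact hall U₀ hU₀ ⟨hmem a α ha hαa, hmem b β hb (by rw [← hab] at hβb; exact hβb)⟩
    · -- x belongs to the set
      intro w _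
      simpa using hδ''
end StarAux


/-- If `X` is an Asplund space (dual with the Krein–Milman property) and `N₁`, `N₂` are two
equivalent dual norms on `X*`, then if the unit sphere of `N₁` with the relative weak-star
topology has property (*), so does the unit sphere of `N₂`. -/
theorem statement12 (X : Type*) [NormedAddCommGroup X] [NormedSpace ℝ X] [CompleteSpace X]
    (hKMP : ∀ B : Set (X →L[ℝ] ℝ), IsClosed B → Bornology.IsBounded B → Convex ℝ B →
      B = closure (convexHull ℝ (Set.extremePoints ℝ B)))
    (N₁ N₂ : (X →L[ℝ] ℝ) → ℝ)
    (hN₁ : IsEquivDualNorm X N₁) (hN₂ : IsEquivDualNorm X N₂)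
    (hstar : HasStarProperty {f : WeakDual ℝ X // N₁ (WeakDual.toStrongDual f) = 1}) :
    HasStarProperty {f : WeakDual ℝ X // N₂ (WeakDual.toStrongDual f) = 1} := by
  classical
  obtain ⟨𝒰, hUopen, hUsep⟩ := hstar
  obtain ⟨c₁, d₁, hc₁, hd₁, hb₁⟩ := hN₁.2.2.1
  have hpos : ∀ f : {f : WeakDual ℝ X // N₂ (WeakDual.toStrongDual f) = 1},
      0 < N₁ (WeakDual.toStrongDual f.1) := by
    intro f
    have hne : WeakDual.toStrongDual f.1 ≠ 0 := by
      intro h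
      have h2 := f.2
      rw [h] at h2
      have hz : N₂ (0 : X →L[ℝ] ℝ) = 0 := by
        have := hN₂.2.1 0 0
        simpa using this
      rw [hz] at h2
      exact one_ne_zero h2.symm
    have h1 := (hb₁ (WeakDual.toStrongDual f.1)).1
    have h2 : 0 < ‖WeakDual.toStrongDual f.1‖ := norm_pos_iff.2 hne
    nlinarith
  apply StarAux.hasStar_of_preds (StarAux.PB N₁ N₂ 𝒰)
  intro x y
  by_cases hxy : x = y
  · exact ⟨none, Or.inl hxy, Set.univ, ⟨isOpen_univ, fun a _ b _ h => h.elim⟩,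
      Or.inl (Set.mem_univ x)⟩
  rcases lt_trichotomy (N₁ (WeakDual.toStrongDual x.1)) (N₁ (WeakDual.toStrongDual y.1)) with
    hlt | heq | hgt
  · -- different N₁-values, N₁ x < N₁ y
    obtain ⟨q, hq1, hq2⟩ := exists_rat_btwn hlt
    refine ⟨some (Sum.inl q), Or.inr (Or.inl (Or.inr ⟨hq1.le, hq2⟩)),
      {f | (q : ℝ) < N₁ (WeakDual.toStrongDual f.1)}, ⟨?_, ?_⟩, Or.inr hq2⟩
    · have hop := (hN₁.2.2.2).isOpen_preimage (q : ℝ)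
      have hEq : {f : {f : WeakDual ℝ X // N₂ (WeakDual.toStrongDual f) = 1} |
          (q : ℝ) < N₁ (WeakDual.toStrongDual f.1)} =
          Subtype.val ⁻¹' ((fun f : WeakDual ℝ X => N₁ (WeakDual.toStrongDual f)) ⁻¹'
            Set.Ioi (q : ℝ)) := by
        ext f
        simp [Set.mem_Ioi]
      rw [hEq]
      exact hop.preimage continuous_subtype_val
    · rintro a ha b hb (⟨h1, _⟩ | ⟨h1, _⟩)
      · exact absurd hb (not_lt.2 h1)
      · exact absurd ha (not_lt.2 h1)
  · -- equal N₁-values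
    have hr0 : 0 < N₁ (WeakDual.toStrongDual x.1) := hpos x
    have hpu : N₁ (WeakDual.toStrongDual ((N₁ (WeakDual.toStrongDual x.1))⁻¹ • x.1)) = 1 := by
      rw [map_smul, hN₁.2.1, abs_of_pos (inv_pos.2 hr0), inv_mul_cancel₀ hr0.ne']
    have hpv : N₁ (WeakDual.toStrongDual ((N₁ (WeakDual.toStrongDual x.1))⁻¹ • y.1)) = 1 := by
      rw [map_smul, hN₁.2.1, abs_of_pos (inv_pos.2 hr0), ← heq, inv_mul_cancel₀ hr0.ne']
    obtain ⟨j, hne, hsub⟩ := hUsep ⟨_, hpu⟩ ⟨_, hpv⟩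
    obtain ⟨z, hzpair, hzU⟩ := hne
    obtain ⟨U₀, hU₀, hzU₀⟩ := Set.mem_sUnion.1 hzU
    rcases Set.mem_insert_iff.1 hzpair with hz | hz
    · subst hz
      obtain ⟨i, hPi, V, hV, hxV⟩ := StarAux.key N₁ N₂ 𝒰 x y ⟨_, hpu⟩ ⟨_, hpv⟩ _ hr0 rfl heq.symm
        hxy rfl rfl j U₀ hU₀ (hUopen j U₀ hU₀) hzU₀ hsub
      exact ⟨i, Or.inr (Or.inl hPi), V, hV, Or.inl hxV⟩
    · rw [Set.mem_singleton_iff] at hz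
      subst hz
      have hsub' : ∀ U ∈ 𝒰 j,
          (({⟨_, hpv⟩, ⟨_, hpu⟩} : Set {f : WeakDual ℝ X // N₁ (WeakDual.toStrongDual f) = 1})
            ∩ U).Subsingleton := by
        intro U hU
        rw [Set.pair_comm]
        exact hsub U hU
      obtain ⟨i, hPi, V, hV, hyV⟩ := StarAux.key N₁ N₂ 𝒰 y x ⟨_, hpv⟩ ⟨_, hpu⟩ _ hr0 heq.symm rfl
        (Ne.symm hxy) rfl rfl j U₀ hU₀ (hUopen j U₀ hU₀) hzU₀ hsub'
      exact ⟨i, Or.inr (Or.inr hPi), V, hV, Or.inr hyV⟩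
  · -- different N₁-values, N₁ y < N₁ x
    obtain ⟨q, hq1, hq2⟩ := exists_rat_btwn hgt
    refine ⟨some (Sum.inl q), Or.inr (Or.inl (Or.inl ⟨hq1.le, hq2⟩)),
      {f | (q : ℝ) < N₁ (WeakDual.toStrongDual f.1)}, ⟨?_, ?_⟩, Or.inl hq2⟩
    · have hop := (hN₁.2.2.2).isOpen_preimage (q : ℝ)
      have hEq : {f : {f : WeakDual ℝ X // N₂ (WeakDual.toStrongDual f) = 1} |
          (q : ℝ) < N₁ (WeakDual.toStrongDual f.1)} =
          Subtype.val ⁻¹' ((fun f : WeakDual ℝ X => N₁ (WeakDual.toStrongDual f)) ⁻¹'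
            Set.Ioi (q : ℝ)) := by
        ext f
        simp [Set.mem_Ioi]
      rw [hEq]
      exact hop.preimage continuous_subtype_val
    · rintro a ha b hb (⟨h1, _⟩ | ⟨h1, _⟩)
      · exact absurd hb (not_lt.2 h1)
      · exact absurd ha (not_lt.2 h1)
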